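/- Let R = ℚ[[ξ]] (or any commutative ring with a topologically nilpotent element ξ) and let A be an associative R-algebra containing elements H and X with [H, X] = −2X, completed so that power series in ξX converge. Define σ = −(1/2)·log(1 − 2ξX) = Σ_{n≥1} (2ξX)ⁿ/(2n) as a formal power series. Then [H, σ] = 1 − exp(2σ) = 1 − (1 − 2ξX)⁻¹, i.e. H σ − σ H = −2ξX·(1−2ξX)⁻¹. -/

import Mathlib

lemma comm_pow {A : Type*} [Ring A] [Algebra ℚ A]
    (H X : A) (hHX : H * X - X * H = -(2 * X)) (n : ℕ) :
    H * X ^ n - X ^ n * H = -((2 * n : ℚ) • X ^ n) := by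
  induction n with
  | zero => simp
  | succ n ih =>
    have key : H * X ^ (n + 1) - X ^ (n + 1) * H
        = (H * X - X * H) * X ^ n + X * (H * X ^ n - X ^ n * H) := by
      rw [pow_succ']
      noncomm_ring
    have h2 : (2 : A) * X = (2 : ℚ) • X := by
      rw [two_smul, two_mul]
    rw [key, hHX, ih, h2, pow_succ']
    push_cast
    rw [neg_mul, smul_mul_assoc, mul_neg, mul_smul_comm]
    module

/-- with `[H, X] = −2X` and
`σ = −½ log(1 − 2ξX) = Σ_{n≥1} (2ξX)ⁿ/(2n)`, one has
`[H, σ] = 1 − (1 − 2ξX)⁻¹ = −2ξX·(1 − 2ξX)⁻¹ = −Σ_{n≥1} (2ξX)ⁿ`.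
Formal series in `ξX` are represented as elements of `A[[ξ]]`: `σ` has `n`-th
coefficient `(2ⁿ/(2n)) • Xⁿ` for `n ≥ 1`, and `−2ξX(1−2ξX)⁻¹` has `n`-th
coefficient `(−2ⁿ) • Xⁿ` for `n ≥ 1`. -/
theorem commutator_with_sigma {A : Type*} [Ring A] [Algebra ℚ A]
    (H X : A) (hHX : H * X - X * H = -(2 * X)) :
    let σ : PowerSeries A :=
      PowerSeries.mk fun n => if n = 0 then 0 else (((2 : ℚ) ^ n / (2 * n)) • X ^ n)
    PowerSeries.C H * σ - σ * PowerSeries.C H =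
      PowerSeries.mk fun n => if n = 0 then 0 else ((-(2 : ℚ) ^ n) • X ^ n) := by
  intro σ
  ext n
  simp only [map_sub, PowerSeries.coeff_C_mul, PowerSeries.coeff_mul_C, PowerSeries.coeff_mk, σ]
  rcases eq_or_ne n 0 with h | h
  · simp [h]
  · simp only [if_neg h]
    rw [mul_smul_comm, smul_mul_assoc, ← smul_sub, comm_pow H X hHX n, smul_neg, smul_smul,
      ← neg_smul]
    congr 1
    have hn : (n : ℚ) ≠ 0 := Nat.cast_ne_zero.mpr h
    field_simp
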